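/- Let B be an essentially small additive category. An object M of the idempotent completion Kar(B) belongs to the weak idempotent completion wkar(B) if and only if the class [M] in the split Grothendieck group K₀^add(Kar(B)) lies in the image of the natural homomorphism K₀^add(B) → K₀^add(Kar(B)). -/

import Mathlib

open CategoryTheory CategoryTheory.Limits CategoryTheory.Idempotents ZeroObject

universe v u v' u'

/-- The relations subgroup for the split Grothendieck group: generated by
`[X] - [Y] - [Z]` for each direct sum decomposition `X ≅ Y ⊞ Z`. -/
def K0Relations (A : Type u) [Category.{v} A] [Preadditive A] [HasBinaryBiproducts A] :
    AddSubgroup (FreeAbelianGroup A) :=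
  AddSubgroup.closure
    {x | ∃ (X Y Z : A), Nonempty (X ≅ Y ⊞ Z) ∧
      x = FreeAbelianGroup.of X - FreeAbelianGroup.of Y - FreeAbelianGroup.of Z}

/-- The split Grothendieck group `K₀^add(A)`: generated by objects of `A`, with
relations `[X] = [Y] + [Z]` whenever `X ≅ Y ⊞ Z`. -/
def K0add (A : Type u) [Category.{v} A] [Preadditive A] [HasBinaryBiproducts A] :=
  FreeAbelianGroup A ⧸ K0Relations A

noncomputable instance (A : Type u) [Category.{v} A] [Preadditive A]
    [HasBinaryBiproducts A] : AddCommGroup (K0add A) :=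
  QuotientAddGroup.Quotient.addCommGroup _

/-- The class `[X] ∈ K₀^add(A)` of an object `X`. -/
def K0class (A : Type u) [Category.{v} A] [Preadditive A] [HasBinaryBiproducts A]
    (X : A) : K0add A :=
  QuotientAddGroup.mk (FreeAbelianGroup.of X)

/-- The homomorphism `K₀^add(A) → K₀^add(A')` induced by an additive functor. -/
noncomputable def K0map {A : Type u} [Category.{v} A] [Preadditive A] [HasBinaryBiproducts A]
    {A' : Type u'} [Category.{v'} A'] [Preadditive A'] [HasBinaryBiproducts A']
    (F : A ⥤ A') [F.Additive] : K0add A →+ K0add A' :=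
  QuotientAddGroup.lift _
    ((QuotientAddGroup.mk' (K0Relations A')).comp (FreeAbelianGroup.map F.obj))
    (by
      rw [K0Relations, AddSubgroup.closure_le]
      rintro x hx
      obtain ⟨X, Y, Z, ⟨e⟩, rfl⟩ := hx
      have hmap : (FreeAbelianGroup.map F.obj)
          (FreeAbelianGroup.of X - FreeAbelianGroup.of Y - FreeAbelianGroup.of Z)
          = FreeAbelianGroup.of (F.obj X) - FreeAbelianGroup.of (F.obj Y)
            - FreeAbelianGroup.of (F.obj Z) := by
        simp [FreeAbelianGroup.map_of_apply]
      apply AddMonoidHom.mem_ker.mpr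
      show (QuotientAddGroup.mk' (K0Relations A'))
        ((FreeAbelianGroup.map F.obj)
          (FreeAbelianGroup.of X - FreeAbelianGroup.of Y - FreeAbelianGroup.of Z)) = 0
      rw [hmap, QuotientAddGroup.mk'_apply, QuotientAddGroup.eq_zero_iff]
      refine AddSubgroup.subset_closure ?_
      haveI := Limits.preservesBinaryBiproduct_of_preservesBiproduct F Y Z
      exact ⟨F.obj X, F.obj Y, F.obj Z, ⟨F.mapIso e ≪≫ F.mapBiprod Y Z⟩, rfl⟩)


section AuxIsoCl

variable (A : Type u) [Category.{v} A] [Preadditive A] [HasBinaryBiproducts A] [HasZeroObject A]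

/-- Isomorphism classes of objects of `A`. -/
abbrev MyIsoCl := Quotient (isIsomorphicSetoid A)

variable {A}

noncomputable instance : Zero (MyIsoCl A) := ⟨⟦0⟧⟩
noncomputable instance : Add (MyIsoCl A) :=
  ⟨Quotient.map₂ (· ⊞ ·) (fun _ _ ⟨e⟩ _ _ ⟨f⟩ => ⟨biprod.mapIso e f⟩)⟩

noncomputable instance : AddCommMonoid (MyIsoCl A) where
  add_assoc a b c := Quotient.inductionOn₃ a b c fun X Y Z =>
    Quotient.sound ⟨biprod.associator X Y Z⟩
  zero_add a := Quotient.inductionOn a fun _ =>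
    Quotient.sound ⟨(isoZeroBiprod (isZero_zero A)).symm⟩
  add_zero a := Quotient.inductionOn a fun X =>
    Quotient.sound ⟨(biprod.braiding X 0).trans (isoZeroBiprod (isZero_zero A)).symm⟩
  add_comm a b := Quotient.inductionOn₂ a b fun X Y => Quotient.sound ⟨biprod.braiding X Y⟩
  nsmul := nsmulRec
  nsmul_zero := fun _ => rfl
  nsmul_succ := fun _ _ => rfl

lemma MyIsoCl.mk_add (X Y : A) : (⟦X⟧ + ⟦Y⟧ : MyIsoCl A) = ⟦X ⊞ Y⟧ := rfl

/-- The Grothendieck group construction on a commutative monoid: pairs `(a, b)`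
representing `a - b`, modulo stable equality. -/
def GrSetoid (M : Type*) [AddCommMonoid M] : Setoid (M × M) where
  r x y := ∃ e : M, e + x.1 + y.2 = e + y.1 + x.2
  iseqv := by
    refine ⟨fun x => ⟨0, rfl⟩, fun ⟨e, he⟩ => ⟨e, he.symm⟩, ?_⟩
    rintro x y z ⟨e1, h1⟩ ⟨e2, h2⟩
    refine ⟨e1 + e2 + y.1 + y.2, ?_⟩
    have h3 : (e1 + x.1 + y.2) + (e2 + y.1 + z.2) = (e1 + y.1 + x.2) + (e2 + z.1 + y.2) := by
      rw [h1, h2]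
    calc e1 + e2 + y.1 + y.2 + x.1 + z.2
        = (e1 + x.1 + y.2) + (e2 + y.1 + z.2) := by abel
      _ = (e1 + y.1 + x.2) + (e2 + z.1 + y.2) := h3
      _ = e1 + e2 + y.1 + y.2 + z.1 + x.2 := by abel

/-- The Grothendieck group of a commutative monoid. -/
abbrev GrGroup (M : Type*) [AddCommMonoid M] := Quotient (GrSetoid M)

namespace GrGroup

variable {M : Type*} [AddCommMonoid M]

instance : Zero (GrGroup M) := ⟨⟦(0, 0)⟧⟩

instance : Add (GrGroup M) :=
  ⟨Quotient.map₂ (fun x y => (x.1 + y.1, x.2 + y.2)) (by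
    rintro x x' ⟨e1, h1⟩ y y' ⟨e2, h2⟩
    refine ⟨e1 + e2, ?_⟩
    have h3 : (e1 + x.1 + x'.2) + (e2 + y.1 + y'.2)
        = (e1 + x'.1 + x.2) + (e2 + y'.1 + y.2) := by rw [h1, h2]
    calc e1 + e2 + (x.1 + y.1) + (x'.2 + y'.2)
        = (e1 + x.1 + x'.2) + (e2 + y.1 + y'.2) := by abel
      _ = (e1 + x'.1 + x.2) + (e2 + y'.1 + y.2) := h3
      _ = e1 + e2 + (x'.1 + y'.1) + (x.2 + y.2) := by abel)⟩

private lemma neg_aux {x y : M × M} (hxy : (GrSetoid M).r x y) :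
    (GrSetoid M).r (x.2, x.1) (y.2, y.1) := by
  obtain ⟨e, h⟩ := hxy
  refine ⟨e, ?_⟩
  calc e + x.2 + y.1 = e + y.1 + x.2 := by abel
    _ = e + x.1 + y.2 := h.symm
    _ = e + y.2 + x.1 := by abel

instance : Neg (GrGroup M) :=
  ⟨Quotient.map (fun x => (x.2, x.1)) (fun _ _ h => neg_aux h)⟩

instance : AddCommGroup (GrGroup M) where
  add_assoc a b c := Quotient.inductionOn₃ a b c fun x y z =>
    Quotient.sound ⟨0, by dsimp only; abel⟩
  zero_add a := Quotient.inductionOn a fun x => Quotient.sound ⟨0, by dsimp only; abel⟩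
  add_zero a := Quotient.inductionOn a fun x => Quotient.sound ⟨0, by dsimp only; abel⟩
  add_comm a b := Quotient.inductionOn₂ a b fun x y => Quotient.sound ⟨0, by abel⟩
  neg_add_cancel a := Quotient.inductionOn a fun x => Quotient.sound ⟨0, by abel⟩
  nsmul := nsmulRec
  zsmul := zsmulRec

/-- The canonical map from a monoid to its Grothendieck group. -/
def mk (a : M) : GrGroup M := ⟦(a, 0)⟧

lemma mk_add (a b : M) : (mk (a + b) : GrGroup M) = mk a + mk b := by
  show (⟦(a + b, 0)⟧ : GrGroup M) = ⟦(a + b, 0 + 0)⟧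
  rw [add_zero]

lemma exists_of_mk_eq_mk {a b : M} (h : (mk a : GrGroup M) = mk b) :
    ∃ e : M, e + a = e + b := by
  obtain ⟨e, he⟩ := Quotient.exact h
  exact ⟨e, by rwa [add_zero, add_zero] at he⟩

end GrGroup

/-- The map from the free abelian group to the Grothendieck group of iso classes. -/
noncomputable def myPhi : FreeAbelianGroup A →+ GrGroup (MyIsoCl A) :=
  FreeAbelianGroup.lift fun X => GrGroup.mk ⟦X⟧

lemma myPhi_of (X : A) : myPhi (FreeAbelianGroup.of X) = GrGroup.mk (⟦X⟧ : MyIsoCl A) :=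
  FreeAbelianGroup.lift_apply_of _ _

lemma myPhi_relations : K0Relations A ≤ (myPhi (A := A)).ker := by
  rw [K0Relations, AddSubgroup.closure_le]
  rintro x ⟨X, Y, Z, ⟨e⟩, rfl⟩
  have hXYZ : (⟦X⟧ : MyIsoCl A) = ⟦Y⟧ + ⟦Z⟧ := by
    rw [MyIsoCl.mk_add]; exact Quotient.sound ⟨e⟩
  show _ ∈ AddMonoidHom.ker _
  rw [AddMonoidHom.mem_ker, map_sub, map_sub, myPhi_of, myPhi_of, myPhi_of, hXYZ,
    GrGroup.mk_add]
  abel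

/-- The induced map on the split Grothendieck group. -/
noncomputable def myPsi : K0add A →+ GrGroup (MyIsoCl A) :=
  QuotientAddGroup.lift _ (myPhi (A := A)) myPhi_relations

lemma myPsi_class (X : A) : myPsi (K0class A X) = GrGroup.mk (⟦X⟧ : MyIsoCl A) := by
  rw [K0class]
  exact (QuotientAddGroup.lift_mk _ _ _).trans (myPhi_of X)

/-- `[X] = [Y]` in `K₀^add A` implies stable isomorphism. -/
lemma stable_of_K0class_eq {X Y : A} (h : K0class A X = K0class A Y) :
    ∃ C : A, Nonempty (C ⊞ X ≅ C ⊞ Y) := by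
  have h2 := congrArg (myPsi (A := A)) h
  rw [myPsi_class, myPsi_class] at h2
  obtain ⟨c, hc⟩ := GrGroup.exists_of_mk_eq_mk h2
  obtain ⟨C, hC⟩ := Quotient.exists_rep c
  rw [← hC, MyIsoCl.mk_add, MyIsoCl.mk_add] at hc
  exact ⟨C, Quotient.exact hc⟩

/-- The basic relation in `K₀^add`. -/
lemma K0class_eq_add {X Y Z : A} (e : X ≅ Y ⊞ Z) :
    K0class A X = K0class A Y + K0class A Z := by
  have h : (FreeAbelianGroup.of X - FreeAbelianGroup.of Y - FreeAbelianGroup.of Z)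
      ∈ K0Relations A :=
    AddSubgroup.subset_closure ⟨X, Y, Z, ⟨e⟩, rfl⟩
  have h2 := (QuotientAddGroup.eq_zero_iff _).2 h
  rw [QuotientAddGroup.mk_sub, QuotientAddGroup.mk_sub] at h2
  rw [K0class, K0class, K0class]
  rw [sub_sub, sub_eq_zero] at h2
  exact h2

lemma K0class_zero : K0class A (0 : A) = 0 := by
  have h := K0class_eq_add (A := A) (isoZeroBiprod (isZero_zero A) (Y := (0 : A)))
  exact add_left_cancel (a := K0class A (0 : A)) (by rw [← h, add_zero])

/-- Every element of `K₀^add A` is a difference of two classes. -/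
lemma K0_exists_diff (z : K0add A) : ∃ P Q : A, z = K0class A P - K0class A Q := by
  obtain ⟨w, rfl⟩ := QuotientAddGroup.mk_surjective z
  induction w using FreeAbelianGroup.induction_on with
  | zero => exact ⟨0, 0, by rw [sub_self]; rfl⟩
  | of x =>
    refine ⟨x, 0, ?_⟩
    rw [K0class_zero, sub_zero]; rfl
  | neg x _ =>
    refine ⟨0, x, ?_⟩
    rw [K0class_zero, zero_sub, K0class]
    rfl
  | add x y hx hy =>
    obtain ⟨P, Q, hP⟩ := hx
    obtain ⟨P', Q', hP'⟩ := hy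
    refine ⟨P ⊞ P', Q ⊞ Q', ?_⟩
    rw [QuotientAddGroup.mk_add, hP, hP', K0class_eq_add (Iso.refl (P ⊞ P')),
      K0class_eq_add (Iso.refl (Q ⊞ Q'))]
    abel

end AuxIsoCl

variable (B : Type u) [Category.{v} B] [Preadditive B] [HasZeroObject B]
  [HasFiniteBiproducts B] [EssentiallySmall.{v} B]

noncomputable instance : HasBinaryBiproducts B :=
  hasBinaryBiproducts_of_finite_biproducts _

noncomputable instance : HasBinaryBiproducts (Karoubi B) :=
  hasBinaryBiproducts_of_finite_biproducts _

/-- Objects of the weak idempotent completion `wkar(B)` inside `Kar(B)`: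
those `Z` with `X ⊞ Z ≅ Y` for some `X`, `Y` coming from `B`. -/
def wkarPred (Z : Karoubi B) : Prop :=
  ∃ X Y : B, Nonempty ((toKaroubi B).obj X ⊞ Z ≅ (toKaroubi B).obj Y)

lemma K0map_toKaroubi_class (X : B) :
    K0map (toKaroubi B) (K0class B X) = K0class (Karoubi B) ((toKaroubi B).obj X) := by
  rw [K0map, K0class]
  refine (QuotientAddGroup.lift_mk _ _ _).trans ?_
  show QuotientAddGroup.mk' _ ((FreeAbelianGroup.map (toKaroubi B).obj) (FreeAbelianGroup.of X)) = _
  rw [FreeAbelianGroup.map_of_apply]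
  rfl

/-- The image of a biproduct under `toKaroubi`. -/
noncomputable def toKaroubiBiprodIso (X Y : B) :
    (toKaroubi B).obj (X ⊞ Y) ≅ (toKaroubi B).obj X ⊞ (toKaroubi B).obj Y := by
  haveI := Limits.preservesBinaryBiproduct_of_preservesBiproduct (toKaroubi B) X Y
  exact (toKaroubi B).mapBiprod X Y

/-- for an essentially small additive category `B`, an object `M` of
`Kar(B)` lies in the weak idempotent completion `wkar(B)` iff its class in the split
Grothendieck group `K₀^add(Kar(B))` lies in the image of `K₀^add(B) → K₀^add(Kar(B))`. -/
theorem mem_wkar_iff_K0class_mem_range (M : Karoubi B) :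
    wkarPred B M ↔
      K0class (Karoubi B) M ∈ (K0map (toKaroubi B)).range := by
  constructor
  · rintro ⟨X, Y, ⟨e⟩⟩
    refine ⟨K0class B Y - K0class B X, ?_⟩
    rw [map_sub, K0map_toKaroubi_class, K0map_toKaroubi_class,
      K0class_eq_add (A := Karoubi B) e.symm]
    abel
  · rintro ⟨z, hz⟩
    obtain ⟨P, Q, rfl⟩ := K0_exists_diff (A := B) z
    rw [map_sub, K0map_toKaroubi_class, K0map_toKaroubi_class] at hz
    have h1 : K0class (Karoubi B) ((toKaroubi B).obj Q ⊞ M)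
        = K0class (Karoubi B) ((toKaroubi B).obj P) := by
      rw [K0class_eq_add (Iso.refl ((toKaroubi B).obj Q ⊞ M)), ← hz]
      abel
    obtain ⟨C, ⟨e⟩⟩ := stable_of_K0class_eq h1
    refine ⟨Q ⊞ C.X, P ⊞ C.X, ⟨?_⟩⟩
    let Kq := (toKaroubi B).obj Q
    let Kp := (toKaroubi B).obj P
    let D := C.complement
    calc (toKaroubi B).obj (Q ⊞ C.X) ⊞ M
        ≅ (Kq ⊞ (toKaroubi B).obj C.X) ⊞ M :=
          biprod.mapIso (toKaroubiBiprodIso B Q C.X) (Iso.refl M)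
      _ ≅ (Kq ⊞ (C ⊞ D)) ⊞ M :=
          biprod.mapIso (biprod.mapIso (Iso.refl Kq) (Karoubi.decomposition C).symm) (Iso.refl M)
      _ ≅ ((Kq ⊞ C) ⊞ D) ⊞ M :=
          biprod.mapIso (biprod.associator Kq C D).symm (Iso.refl M)
      _ ≅ (Kq ⊞ C) ⊞ (D ⊞ M) := biprod.associator _ _ _
      _ ≅ (Kq ⊞ C) ⊞ (M ⊞ D) := biprod.mapIso (Iso.refl _) (biprod.braiding D M)
      _ ≅ ((Kq ⊞ C) ⊞ M) ⊞ D := (biprod.associator _ _ _).symm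
      _ ≅ ((C ⊞ Kq) ⊞ M) ⊞ D :=
          biprod.mapIso (biprod.mapIso (biprod.braiding Kq C) (Iso.refl M)) (Iso.refl D)
      _ ≅ (C ⊞ (Kq ⊞ M)) ⊞ D := biprod.mapIso (biprod.associator C Kq M) (Iso.refl D)
      _ ≅ (C ⊞ Kp) ⊞ D := biprod.mapIso e (Iso.refl D)
      _ ≅ (Kp ⊞ C) ⊞ D := biprod.mapIso (biprod.braiding C Kp) (Iso.refl D)
      _ ≅ Kp ⊞ (C ⊞ D) := biprod.associator _ _ _
      _ ≅ Kp ⊞ (toKaroubi B).obj C.X := biprod.mapIso (Iso.refl Kp) (Karoubi.decomposition C)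
      _ ≅ (toKaroubi B).obj (P ⊞ C.X) := (toKaroubiBiprodIso B P C.X).symm
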